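/- arXiv:1105.5853 — 2 statements merged into one kernel-verified Lean document; each statement's English description precedes it below -/
import Mathlib

section
/- Let Φ be an m×k real matrix and let I, J be disjoint index sets with I ∪ J = {1,…,k}. Let Φ_I, Φ_J denote the submatrices of Φ formed by the columns indexed by I and J, and let P_I = Id − Φ_I(Φ_I'Φ_I)^{-1}Φ_I' be the orthogonal projection onto the orthogonal complement of the column span of Φ_I (assuming Φ_I has full column rank). Then the minimum eigenvalue of Φ_J' P_I Φ_J is at least σ_min(Φ)², the square of the smallest singular value of Φ. -/
open Matrix

/-- Singular-value bound for projected submatrices: if the columns of `Φ` are split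
into two disjoint groups `Φ_I` and `Φ_J` (together exhausting all columns), `Φ_I` has
full column rank, and `P_I` is the orthogonal projection onto the orthogonal
complement of the column span of `Φ_I`, then
`Φ_Jᵀ P_I Φ_J ⪰ σ² Id` whenever `Φᵀ Φ ⪰ σ² Id` (i.e. the minimum eigenvalue of
`Φ_Jᵀ P_I Φ_J` is at least the square of the smallest singular value of `Φ`). -/
theorem submatrix_projection_min_eigenvalue_bound
    {m kI kJ : ℕ} (Φ : Matrix (Fin m) (Fin kI ⊕ Fin kJ) ℝ) (σ : ℝ)
    (ΦI : Matrix (Fin m) (Fin kI) ℝ) (ΦJ : Matrix (Fin m) (Fin kJ) ℝ)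
    (hI : ΦI = Φ.submatrix id Sum.inl) (hJ : ΦJ = Φ.submatrix id Sum.inr)
    (hrank : IsUnit (ΦIᵀ * ΦI).det)
    (PI : Matrix (Fin m) (Fin m) ℝ)
    (hPI : PI = 1 - ΦI * (ΦIᵀ * ΦI)⁻¹ * ΦIᵀ)
    (hmin : (Φᵀ * Φ - σ ^ 2 • (1 : Matrix (Fin kI ⊕ Fin kJ) (Fin kI ⊕ Fin kJ) ℝ)).PosSemidef) :
    (ΦJᵀ * PI * ΦJ - σ ^ 2 • (1 : Matrix (Fin kJ) (Fin kJ) ℝ)).PosSemidef := by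
  set G := ΦIᵀ * ΦI with hG
  -- symmetry of G⁻¹
  have hGsym : Gᵀ = G := by simp [hG, transpose_mul]
  have hGinvsym : (G⁻¹)ᵀ = G⁻¹ := by
    rw [Matrix.transpose_nonsing_inv, hGsym]
  -- PI symmetric
  have hPIsym : PIᵀ = PI := by
    simp [hPI, transpose_sub, transpose_mul, hGinvsym, Matrix.mul_assoc]
  -- PI idempotent
  have hidem : PI * PI = PI := by
    rw [hPI]
    have h1 : ΦI * G⁻¹ * ΦIᵀ * (ΦI * G⁻¹ * ΦIᵀ) = ΦI * G⁻¹ * ΦIᵀ := by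
      calc ΦI * G⁻¹ * ΦIᵀ * (ΦI * G⁻¹ * ΦIᵀ)
          = ΦI * (G⁻¹ * (G * (G⁻¹ * ΦIᵀ))) := by
            simp only [hG, Matrix.mul_assoc]
        _ = ΦI * G⁻¹ * ΦIᵀ := by
            rw [Matrix.nonsing_inv_mul_cancel_left _ _ hrank, Matrix.mul_assoc]
    rw [Matrix.sub_mul, Matrix.mul_sub, Matrix.mul_sub, Matrix.one_mul, Matrix.mul_one, h1]
    simp [Matrix.one_mul]
  have hPP : PIᵀ * PI = PI := by rw [hPIsym, hidem]
  -- Φ as block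
  have hblock : Φ = fromCols ΦI ΦJ := by
    rw [hI, hJ]; ext i j; cases j <;> rfl
  refine Matrix.PosSemidef.of_dotProduct_mulVec_nonneg ?_ ?_
  · have h1 : (ΦJᵀ * PI * ΦJ).IsHermitian := by
      have := isHermitian_conjTranspose_mul_mul (A := PI) ΦJ (by
        simpa [Matrix.IsHermitian] using hPIsym)
      simpa using this
    have h2 : ((σ ^ 2 • (1 : Matrix (Fin kJ) (Fin kJ) ℝ))).IsHermitian := by
      simp [Matrix.IsHermitian]
    exact h1.sub h2
  · intro x
    set u := ΦJ *ᵥ x with hu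
    set w := (G⁻¹ * ΦIᵀ) *ᵥ u with hw
    set y : Fin kI ⊕ Fin kJ → ℝ := Sum.elim (-w) x with hy
    have hv : PI *ᵥ u = Φ *ᵥ y := by
      rw [hblock, hy, fromCols_mulVec_sumElim, hPI]
      simp [Matrix.sub_mulVec, Matrix.mulVec_neg, Matrix.mulVec_mulVec, Matrix.mul_assoc, hw]
      abel
    have key : star x ⬝ᵥ ((ΦJᵀ * PI * ΦJ) *ᵥ x) = (Φ *ᵥ y) ⬝ᵥ (Φ *ᵥ y) := by
      calc star x ⬝ᵥ ((ΦJᵀ * PI * ΦJ) *ᵥ x)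
          = x ⬝ᵥ (ΦJᵀ *ᵥ (PI *ᵥ u)) := by
            simp [hu, Matrix.mulVec_mulVec, star, Matrix.mul_assoc]
        _ = (ΦJ *ᵥ x) ⬝ᵥ (PI *ᵥ u) := by
            rw [Matrix.dotProduct_mulVec, Matrix.vecMul_transpose]
        _ = u ⬝ᵥ ((PIᵀ * PI) *ᵥ u) := by rw [hPP, hu]
        _ = (PI *ᵥ u) ⬝ᵥ (PI *ᵥ u) := by
            rw [← Matrix.mulVec_mulVec, Matrix.dotProduct_mulVec, Matrix.vecMul_transpose]
        _ = (Φ *ᵥ y) ⬝ᵥ (Φ *ᵥ y) := by rw [hv]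
    have hmy := hmin.dotProduct_mulVec_nonneg y
    have hy2 : star y ⬝ᵥ ((Φᵀ * Φ) *ᵥ y) = (Φ *ᵥ y) ⬝ᵥ (Φ *ᵥ y) := by
      rw [← Matrix.mulVec_mulVec, Matrix.dotProduct_mulVec]
      simp [Matrix.vecMul_transpose, star]
    have hyy : y ⬝ᵥ y = w ⬝ᵥ w + x ⬝ᵥ x := by
      simp [hy, dotProduct, Fintype.sum_sum_type]
    have hww : 0 ≤ w ⬝ᵥ w := Finset.sum_nonneg fun i _ => mul_self_nonneg _
    have hxx : star x ⬝ᵥ ((σ ^ 2 • (1 : Matrix (Fin kJ) (Fin kJ) ℝ)) *ᵥ x) = σ ^ 2 * (x ⬝ᵥ x) := by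
      simp [Matrix.smul_mulVec, dotProduct_smul, star, smul_eq_mul]
    have hmy' : σ ^ 2 * (y ⬝ᵥ y) ≤ (Φ *ᵥ y) ⬝ᵥ (Φ *ᵥ y) := by
      have := hmy
      rw [Matrix.sub_mulVec, dotProduct_sub, hy2] at this
      have h3 : star y ⬝ᵥ ((σ ^ 2 • (1 : Matrix (Fin kI ⊕ Fin kJ) (Fin kI ⊕ Fin kJ) ℝ)) *ᵥ y)
          = σ ^ 2 * (y ⬝ᵥ y) := by
        simp [Matrix.smul_mulVec, star, smul_eq_mul]
      rw [h3] at this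
      linarith
    rw [Matrix.sub_mulVec, dotProduct_sub, key, hxx]
    have hsq : 0 ≤ σ ^ 2 := sq_nonneg σ
    nlinarith [mul_nonneg hsq hww]
end

section
/- Let S be an m×k real matrix partitioned columnwise as S = [Φ_I Φ_J] with Φ_I having full column rank. If S'S ⪰ σ²·Id for some σ ≥ 0, then Φ_J'Φ_J − Φ_J'Φ_I(Φ_I'Φ_I)^{-1}Φ_I'Φ_J ⪰ σ²·Id. -/
open Matrix

/-- Schur-complement bound: if `S = [Φ_I  Φ_J]` (a columnwise partition), `Φ_I` has
full column rank, and `Sᵀ S ⪰ σ² Id`, then the Schur complement satisfies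
`Φ_Jᵀ Φ_J - Φ_Jᵀ Φ_I (Φ_Iᵀ Φ_I)⁻¹ Φ_Iᵀ Φ_J ⪰ σ² Id`. -/
theorem schur_complement_lower_bound
    {m kI kJ : ℕ} (S : Matrix (Fin m) (Fin kI ⊕ Fin kJ) ℝ)
    (ΦI : Matrix (Fin m) (Fin kI) ℝ) (ΦJ : Matrix (Fin m) (Fin kJ) ℝ)
    (hI : ΦI = S.submatrix id Sum.inl) (hJ : ΦJ = S.submatrix id Sum.inr)
    (hrank : IsUnit (ΦIᵀ * ΦI).det)
    (σ : ℝ) (hσ : 0 ≤ σ)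
    (hS : (Sᵀ * S - σ ^ 2 • (1 : Matrix (Fin kI ⊕ Fin kJ) (Fin kI ⊕ Fin kJ) ℝ)).PosSemidef) :
    (ΦJᵀ * ΦJ - ΦJᵀ * ΦI * (ΦIᵀ * ΦI)⁻¹ * ΦIᵀ * ΦJ -
      σ ^ 2 • (1 : Matrix (Fin kJ) (Fin kJ) ℝ)).PosSemidef := by
  set A : Matrix (Fin kI) (Fin kI) ℝ := ΦIᵀ * ΦI with hA
  set B : Matrix (Fin kI) (Fin kJ) ℝ := ΦIᵀ * ΦJ with hB
  set C : Matrix (Fin kI) (Fin kJ) ℝ := A⁻¹ * B with hC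
  set W : Matrix (Fin kI ⊕ Fin kJ) (Fin kJ) ℝ := fromRows (-C) 1 with hW
  have hScols : S = fromCols ΦI ΦJ := by
    ext i j
    cases j <;> simp [fromCols, hI, hJ]
  have hAsymm : Aᵀ = A := by simp [hA, Matrix.transpose_mul]
  have hAinv : A * A⁻¹ = 1 := mul_nonsing_inv A hrank
  have hAinvT : (A⁻¹)ᵀ = A⁻¹ := by
    rw [Matrix.transpose_nonsing_inv, hAsymm]
  have key : ΦJᵀ * ΦJ - ΦJᵀ * ΦI * (ΦIᵀ * ΦI)⁻¹ * ΦIᵀ * ΦJ -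
      σ ^ 2 • (1 : Matrix (Fin kJ) (Fin kJ) ℝ) =
      Wᵀ * (Sᵀ * S - σ ^ 2 • 1) * W + (σ • C)ᵀ * (σ • C) := by
    have hStS : Sᵀ * S = fromBlocks A B Bᵀ (ΦJᵀ * ΦJ) := by
      rw [hScols, transpose_fromCols, fromRows_mul_fromCols]
      congr 1
      simp [hB, Matrix.transpose_mul]
    have h1 : (1 : Matrix (Fin kI ⊕ Fin kJ) (Fin kI ⊕ Fin kJ) ℝ) =
        fromBlocks 1 0 0 1 := by simp [fromBlocks_one]
    have hM : fromBlocks A B Bᵀ (ΦJᵀ * ΦJ) -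
        σ ^ 2 • (1 : Matrix (Fin kI ⊕ Fin kJ) (Fin kI ⊕ Fin kJ) ℝ) =
        fromBlocks (A - σ ^ 2 • 1) B Bᵀ (ΦJᵀ * ΦJ - σ ^ 2 • 1) := by
      ext (i | i) (j | j) <;>
        simp [fromBlocks, Matrix.one_apply, Matrix.sub_apply, Matrix.smul_apply]
    rw [hStS, hM, hW, transpose_fromRows, Matrix.mul_assoc (fromCols (-C)ᵀ 1ᵀ),
      fromBlocks_mul_fromRows, fromCols_mul_fromRows, transpose_one]
    have hCT : Cᵀ = Bᵀ * A⁻¹ := by rw [hC, Matrix.transpose_mul, hAinvT]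
    have hBJI : ΦJᵀ * ΦI = Bᵀ := by simp [hB, Matrix.transpose_mul]
    rw [hBJI]
    have hAC : A * C = B := by
      rw [hC, ← Matrix.mul_assoc, hAinv, Matrix.one_mul]
    simp only [Matrix.transpose_neg, hCT, Matrix.sub_mul, Matrix.mul_sub,
      Matrix.mul_neg, Matrix.neg_mul, Matrix.mul_one, Matrix.one_mul,
      Matrix.mul_add, Matrix.add_mul, Matrix.smul_mul, Matrix.mul_smul,
      Matrix.transpose_smul, smul_smul, Matrix.mul_zero, Matrix.zero_mul,
      sub_zero, zero_sub, sub_neg_eq_add, neg_neg]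
    have e1 : Bᵀ * (ΦIᵀ * ΦI)⁻¹ * ΦIᵀ * ΦJ = Bᵀ * A⁻¹ * B := by
      rw [Matrix.mul_assoc (Bᵀ * A⁻¹) ΦIᵀ ΦJ]
    have e2 : Bᵀ * C = Bᵀ * A⁻¹ * B := by rw [hC, Matrix.mul_assoc]
    rw [hAC, e1, e2]
    module
  rw [key]
  have h1 : (Wᵀ * (Sᵀ * S - σ ^ 2 • 1) * W).PosSemidef := by
    have := hS.conjTranspose_mul_mul_same W
    simpa [conjTranspose_eq_transpose_of_trivial] using this
  have h2 : ((σ • C)ᵀ * (σ • C)).PosSemidef := by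
    have := posSemidef_conjTranspose_mul_self (σ • C)
    simpa [conjTranspose_eq_transpose_of_trivial] using this
  exact h1.add h2
end
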